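/- Let n be an odd positive integer, let k be a positive integer with 2^k < n < 2^(k+1), and let a = n − 2^k. Then there exists an orientation of the n-cube in which every vertex has in-degree a or n. -/

import Mathlib

/-- Flip coordinate `i` of a binary `n`-tuple. -/
def flipBit {n : ℕ} (v : Fin n → ZMod 2) (i : Fin n) : Fin n → ZMod 2 :=
  Function.update v i (v i + 1)

/-- An orientation of the `n`-cube: to each edge (a pair of vertices differing in
exactly one coordinate) we assign a head, one of its two endpoints.  The edge at
vertex `v` in direction `i` joins `v` and `flipBit v i`; `head v i` is the
assigned head of that edge, which must be one of the endpoints and must not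
depend on from which endpoint the edge is viewed. -/
structure CubeOrientation (n : ℕ) where
  head : (Fin n → ZMod 2) → Fin n → (Fin n → ZMod 2)
  head_mem : ∀ v i, head v i = v ∨ head v i = flipBit v i
  compatible : ∀ v i, head (flipBit v i) i = head v i

/-- The in-degree of a vertex `v`: the number of edges incident to `v`
whose head is `v`. -/
def CubeOrientation.inDeg {n : ℕ} (o : CubeOrientation n) (v : Fin n → ZMod 2) : ℕ :=
  (Finset.univ.filter fun i : Fin n => o.head v i = v).card

namespace PrimOrient

open Finset

lemma z2 : ∀ x : ZMod 2, x = 0 ∨ x = 1 := by decide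
lemma z2_add_self : ∀ x : ZMod 2, x + x = 0 := by decide
lemma z2_ss : ∀ x : ZMod 2, x + 1 + 1 = x := by decide
lemma z2_sne : ∀ x : ZMod 2, x + 1 ≠ x := by decide

lemma vec_add_self {k : ℕ} (x : Fin k → ZMod 2) : x + x = 0 := by
  funext j; exact z2_add_self (x j)

lemma flipBit_flipBit {n : ℕ} (v : Fin n → ZMod 2) (i : Fin n) :
    flipBit (flipBit v i) i = v := by
  funext j
  by_cases h : j = i
  · subst h
    simp only [flipBit, Function.update_self]
    exact z2_ss (v j)
  · simp only [flipBit, Function.update_of_ne h]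

lemma flipBit_ne {n : ℕ} (v : Fin n → ZMod 2) (i : Fin n) : flipBit v i ≠ v := by
  intro h
  have := congrFun h i
  rw [flipBit, Function.update_self] at this
  exact z2_sne (v i) this

def cubeE (k : ℕ) : (Fin k → ZMod 2) ≃ Fin (2 ^ k) := finFunctionFinEquiv

def phi (n k : ℕ) (i : Fin n) : Fin k → ZMod 2 :=
  if h : i.val < 2 ^ k then (cubeE k).symm ⟨i.val, h⟩ else 0

def sig (n k : ℕ) (v : Fin n → ZMod 2) : Fin k → ZMod 2 :=
  ∑ i, v i • phi n k i

def par (n : ℕ) (v : Fin n → ZMod 2) : ZMod 2 := ∑ i, v i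

def osig (n k : ℕ) (v : Fin n → ZMod 2) (i : Fin n) : Fin k → ZMod 2 :=
  if par n v = 1 then sig n k v else sig n k v + phi n k i

def mark (n k : ℕ) (T : Finset (Fin k → ZMod 2)) (v : Fin n → ZMod 2) (i : Fin n) : Prop :=
  i.val < 2 ^ k ∧ osig n k v i ∈ T

instance (n k : ℕ) (T : Finset (Fin k → ZMod 2)) (v : Fin n → ZMod 2) (i : Fin n) :
    Decidable (mark n k T v i) := by unfold mark; infer_instance

def sfun (n k : ℕ) (T : Finset (Fin k → ZMod 2)) (v : Fin n → ZMod 2) (i : Fin n) : ZMod 2 :=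
  par n v + (if mark n k T v i then 1 else 0)

def headFun (n k : ℕ) (T : Finset (Fin k → ZMod 2)) (v : Fin n → ZMod 2) (i : Fin n) :
    Fin n → ZMod 2 :=
  if sfun n k T v i = 1 then v else flipBit v i

lemma sum_flip {n : ℕ} {M : Type*} [AddCommMonoid M] (v : Fin n → ZMod 2) (i : Fin n)
    (g : Fin n → ZMod 2 → M) :
    ∑ j, g j (flipBit v i j) = g i (v i + 1) + ∑ j ∈ univ.erase i, g j (v j) := by
  rw [← Finset.add_sum_erase _ _ (mem_univ i)]
  congr 1
  · simp [flipBit]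
  · exact Finset.sum_congr rfl fun j hj => by
      rw [flipBit, Function.update_of_ne (Finset.ne_of_mem_erase hj)]

lemma sum_split {n : ℕ} {M : Type*} [AddCommMonoid M] (v : Fin n → ZMod 2) (i : Fin n)
    (g : Fin n → ZMod 2 → M) :
    ∑ j, g j (v j) = g i (v i) + ∑ j ∈ univ.erase i, g j (v j) :=
  (Finset.add_sum_erase _ _ (mem_univ i)).symm

lemma par_flip {n : ℕ} (v : Fin n → ZMod 2) (i : Fin n) :
    par n (flipBit v i) = par n v + 1 := by
  have h1 := sum_flip v i (fun _ x => x)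
  have h2 := sum_split v i (fun _ x => x)
  simp only [par] at *
  rw [h1, h2]
  ring

lemma sig_flip {n k : ℕ} (v : Fin n → ZMod 2) (i : Fin n) :
    sig n k (flipBit v i) = sig n k v + phi n k i := by
  have h1 := sum_flip v i (fun j x => x • phi n k j)
  have h2 := sum_split v i (fun j x => x • phi n k j)
  simp only [sig] at *
  rw [h1, h2, add_smul, one_smul]
  abel

lemma osig_flip {n k : ℕ} (v : Fin n → ZMod 2) (i : Fin n) :
    osig n k (flipBit v i) i = osig n k v i := by
  unfold osig
  rcases z2 (par n v) with hp | hp <;> rw [par_flip, hp]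
  · rw [zero_add, if_pos rfl, if_neg (by decide : ¬ (0:ZMod 2) = 1), sig_flip]
  · rw [if_neg (by decide : ¬ (1+1:ZMod 2) = 1), if_pos rfl, sig_flip, add_assoc,
      vec_add_self, add_zero]

lemma mark_flip {n k : ℕ} (T : Finset (Fin k → ZMod 2)) (v : Fin n → ZMod 2) (i : Fin n) :
    mark n k T (flipBit v i) i ↔ mark n k T v i := by
  unfold mark
  rw [osig_flip]

lemma sfun_flip {n k : ℕ} (T : Finset (Fin k → ZMod 2)) (v : Fin n → ZMod 2) (i : Fin n) :
    sfun n k T (flipBit v i) i = sfun n k T v i + 1 := by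
  unfold sfun
  rw [par_flip]
  rw [if_congr (mark_flip T v i) rfl rfl]
  ring

lemma headFun_mem {n k : ℕ} (T : Finset (Fin k → ZMod 2)) (v : Fin n → ZMod 2) (i : Fin n) :
    headFun n k T v i = v ∨ headFun n k T v i = flipBit v i := by
  unfold headFun
  split
  · exact Or.inl rfl
  · exact Or.inr rfl

lemma headFun_compat {n k : ℕ} (T : Finset (Fin k → ZMod 2)) (v : Fin n → ZMod 2) (i : Fin n) :
    headFun n k T (flipBit v i) i = headFun n k T v i := by
  unfold headFun
  rcases z2 (sfun n k T v i) with hs | hs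
  · have h1 : sfun n k T (flipBit v i) i = 1 := by rw [sfun_flip, hs, zero_add]
    rw [if_pos h1, if_neg (by rw [hs]; decide)]
  · have h1 : ¬ sfun n k T (flipBit v i) i = 1 := by rw [sfun_flip, hs]; decide
    rw [if_neg h1, if_pos hs, flipBit_flipBit]

lemma headFun_eq_iff {n k : ℕ} (T : Finset (Fin k → ZMod 2)) (v : Fin n → ZMod 2) (i : Fin n) :
    headFun n k T v i = v ↔ sfun n k T v i = 1 := by
  unfold headFun
  constructor
  · intro h
    by_contra hne
    rw [if_neg hne] at h
    exact flipBit_ne v i h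
  · intro h
    rw [if_pos h]

end PrimOrient

open Finset PrimOrient in
theorem primitive_orientation_exists (n k : ℕ) (hodd : Odd n) (hk : 0 < k)
    (h1 : 2 ^ k < n) (h2 : n < 2 ^ (k + 1)) (a : ℕ) (ha : a = n - 2 ^ k) :
    ∃ o : CubeOrientation n, ∀ v, o.inDeg v = a ∨ o.inDeg v = n := by
  have h2k : 2 ^ k ≤ n := le_of_lt h1
  have haT : a ≤ 2 ^ k := by
    have : 2 ^ (k + 1) = 2 ^ k + 2 ^ k := by ring
    omega
  obtain ⟨T, -, hT⟩ : ∃ T ⊆ (univ : Finset (Fin k → ZMod 2)), T.card = a := by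
    apply Finset.exists_subset_card_eq
    rw [card_univ]
    have : Fintype.card (Fin k → ZMod 2) = 2 ^ k := by simp
    omega
  refine ⟨⟨headFun n k T, headFun_mem T, headFun_compat T⟩, ?_⟩
  intro v
  have hdeg : (⟨headFun n k T, headFun_mem T, headFun_compat T⟩ :
      CubeOrientation n).inDeg v = (univ.filter fun i => sfun n k T v i = 1).card := by
    unfold CubeOrientation.inDeg
    congr 1
    exact Finset.filter_congr fun i _ => headFun_eq_iff T v i
  rw [hdeg]
  rcases z2 (par n v) with hp | hp
  · -- even vertex: in-degree = |T| = a
    left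
    have hiff : ∀ i : Fin n,
        (sfun n k T v i = 1 ↔ (i.val < 2 ^ k ∧ sig n k v + phi n k i ∈ T)) := by
      intro i
      unfold sfun mark osig
      simp only [hp, show ((0:ZMod 2) = 1) ↔ False from by decide, if_false, zero_add]
      by_cases hc : (i.val < 2 ^ k ∧ sig n k v + phi n k i ∈ T)
      · rw [if_pos hc]
        exact iff_of_true rfl hc
      · rw [if_neg hc]
        exact iff_of_false (by decide) hc
    rw [Finset.filter_congr fun i _ => hiff i, ← hT]
    apply Finset.card_bij (fun i _ => sig n k v + phi n k i)
    · intro i hi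
      exact (mem_filter.mp hi).2.2
    · intro i₁ h₁ i₂ h₂ h
      have e1 := (mem_filter.mp h₁).2.1
      have e2 := (mem_filter.mp h₂).2.1
      have hphi : phi n k i₁ = phi n k i₂ := by exact add_left_cancel h
      unfold phi at hphi
      rw [dif_pos e1, dif_pos e2] at hphi
      have hmk := (cubeE k).symm.injective hphi
      exact Fin.ext (congrArg (Fin.val (n := 2 ^ k)) hmk)
    · intro t ht
      set j := cubeE k (sig n k v + t) with hj
      refine ⟨⟨j.val, lt_of_lt_of_le j.isLt h2k⟩, ?_, ?_⟩
      · rw [mem_filter]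
        refine ⟨mem_univ _, j.isLt, ?_⟩
        have hphi : phi n k ⟨j.val, lt_of_lt_of_le j.isLt h2k⟩ = sig n k v + t := by
          unfold phi
          rw [dif_pos j.isLt]
          have : (⟨j.val, j.isLt⟩ : Fin (2 ^ k)) = j := rfl
          rw [this, hj, Equiv.symm_apply_apply]
        rw [hphi, ← add_assoc, vec_add_self, zero_add]
        exact ht
      · have hphi : phi n k ⟨j.val, lt_of_lt_of_le j.isLt h2k⟩ = sig n k v + t := by
          unfold phi
          rw [dif_pos j.isLt]
          have : (⟨j.val, j.isLt⟩ : Fin (2 ^ k)) = j := rfl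
          rw [this, hj, Equiv.symm_apply_apply]
        rw [hphi, ← add_assoc, vec_add_self, zero_add]
  · -- odd vertex
    have hsf : ∀ i : Fin n, sfun n k T v i =
        1 + (if (i.val < 2 ^ k ∧ sig n k v ∈ T) then 1 else 0) := by
      intro i
      unfold sfun mark osig
      simp only [hp, show ((1:ZMod 2) = 1) ↔ True from by decide, if_true]
    by_cases hσ : sig n k v ∈ T
    · -- in-degree = n - 2^k = a
      left
      have hiff : ∀ i : Fin n, (sfun n k T v i = 1 ↔ ¬ i.val < 2 ^ k) := by
        intro i
        rw [hsf i]
        by_cases hi : i.val < 2 ^ k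
        · rw [if_pos ⟨hi, hσ⟩]
          simp only [hi, not_true_eq_false, iff_false]
          decide
        · rw [if_neg (fun hc => hi hc.1), add_zero]
          simp [hi]
      rw [Finset.filter_congr fun i _ => hiff i]
      have hlt : (univ.filter fun i : Fin n => i.val < 2 ^ k) =
          Finset.Iio (⟨2 ^ k, h1⟩ : Fin n) := by
        ext i
        simp [Fin.lt_def]
      have hcard : (univ.filter fun i : Fin n => i.val < 2 ^ k).card = 2 ^ k := by
        rw [hlt, Fin.card_Iio]
      have hsplit := Finset.card_filter_add_card_filter_not
        (s := (univ : Finset (Fin n))) (p := fun i : Fin n => i.val < 2 ^ k)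
      rw [card_univ, Fintype.card_fin] at hsplit
      omega
    · -- in-degree = n
      right
      have hiff : ∀ i : Fin n, (sfun n k T v i = 1 ↔ True) := by
        intro i
        rw [hsf i, if_neg (fun hc => hσ hc.2), add_zero]
        simp
      rw [Finset.filter_congr fun i _ => hiff i]
      simp
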